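/- Let (A, A*) be a tridiagonal pair on V with eigenspace orderings V_0, ..., V_d of A and V*_0, ..., V*_d of A*, and let D denote the subalgebra of End(V) generated by A. If there exists a nonzero X ∈ D such that X V*_0 ⊆ V*_d, then every eigenspace V_i of A and every eigenspace V*_i of A* has dimension 1 over K; that is, (A, A*) is a Leonard pair. -/

import Mathlib

open Polynomial

/-- A tridiagonal pair on `V`, with eigenspace orderings `Ev 0, ..., Ev d` of `A`
(with eigenvalues `θ 0, ..., θ d`) and `Ew 0, ..., Ew d` of `B = A*`
(with eigenvalues `θ' 0, ..., θ' d`).  For indices `i > d` we set `Ev i = ⊥`,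
`Ew i = ⊥`, encoding the conventions `V_{-1} = 0`, `V_{d+1} = 0`
(note `Ev (0 - 1) = Ev 0` by truncated subtraction, which is harmless in the
tridiagonal conditions below since `Ev i` appears in the sum anyway). -/
structure TridiagonalPair (K V : Type*) [Field K] [AddCommGroup V] [Module K V]
    [FiniteDimensional K V] where
  A : Module.End K V
  B : Module.End K V
  d : ℕ
  Ev : ℕ → Submodule K V
  Ew : ℕ → Submodule K V
  θ : ℕ → K
  θ' : ℕ → K
  hEv_eig : ∀ i ≤ d, Ev i = Module.End.eigenspace A (θ i)
  hEv_ne : ∀ i ≤ d, Ev i ≠ ⊥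
  hEv_all : ∀ μ : K, Module.End.eigenspace A μ ≠ ⊥ → ∃ i ≤ d, θ i = μ
  hθ_inj : ∀ i ≤ d, ∀ j ≤ d, θ i = θ j → i = j
  hEv_top : (⨆ i ∈ Finset.range (d + 1), Ev i) = ⊤
  hEv_bot : ∀ i, d < i → Ev i = ⊥
  hEw_eig : ∀ i ≤ d, Ew i = Module.End.eigenspace B (θ' i)
  hEw_ne : ∀ i ≤ d, Ew i ≠ ⊥
  hEw_all : ∀ μ : K, Module.End.eigenspace B μ ≠ ⊥ → ∃ i ≤ d, θ' i = μ
  hθ'_inj : ∀ i ≤ d, ∀ j ≤ d, θ' i = θ' j → i = j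
  hEw_top : (⨆ i ∈ Finset.range (d + 1), Ew i) = ⊤
  hEw_bot : ∀ i, d < i → Ew i = ⊥
  hTriB : ∀ i ≤ d, ∀ v ∈ Ev i, B v ∈ Ev (i - 1) ⊔ Ev i ⊔ Ev (i + 1)
  hTriA : ∀ i ≤ d, ∀ v ∈ Ew i, A v ∈ Ew (i - 1) ⊔ Ew i ⊔ Ew (i + 1)
  hIrr : ∀ W : Submodule K V, (∀ v ∈ W, A v ∈ W) → (∀ v ∈ W, B v ∈ W) →
    W = ⊥ ∨ W = ⊤

/-- The polynomial `τ_i = (λ - θ_0)(λ - θ_1) ⋯ (λ - θ_{i-1})`. -/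
noncomputable def tau {K : Type*} [Field K] (θ : ℕ → K) (i : ℕ) : Polynomial K :=
  ∏ k ∈ Finset.range i, (X - C (θ k))

namespace TDPaux

variable {K V : Type*} [Field K] [AddCommGroup V] [Module K V] [FiniteDimensional K V]

theorem tau_zero (θ : ℕ → K) : tau θ 0 = 1 := by simp [tau]

theorem tau_succ (θ : ℕ → K) (i : ℕ) : tau θ (i + 1) = tau θ i * (X - C (θ i)) :=
  Finset.prod_range_succ _ _

theorem tau_monic (θ : ℕ → K) (i : ℕ) : (tau θ i).Monic :=
  monic_prod_of_monic _ _ fun k _ => monic_X_sub_C (θ k)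

theorem tau_natDegree (θ : ℕ → K) (i : ℕ) : (tau θ i).natDegree = i := by
  unfold tau
  rw [natDegree_prod]
  · simp
  · intro k _
    exact X_sub_C_ne_zero (θ k)

theorem tau_eval (θ : ℕ → K) (i : ℕ) (x : K) :
    (tau θ i).eval x = ∏ k ∈ Finset.range i, (x - θ k) := by
  simp [tau, eval_prod]

theorem tau_comb (θ : ℕ → K) :
    ∀ (m : ℕ) (f : K[X]), f.natDegree ≤ m →
      ∃ c : ℕ → K, (∀ i, m < i → c i = 0) ∧
        f = ∑ i ∈ Finset.range (m + 1), C (c i) * tau θ i := by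
  intro m
  induction m with
  | zero =>
    intro f hf
    refine ⟨fun i => if i = 0 then f.coeff 0 else 0, ?_, ?_⟩
    · intro i hi
      simp only [if_neg (by omega : ¬ i = 0)]
    · rw [eq_C_of_natDegree_le_zero hf]
      simp [tau_zero]
  | succ m ih =>
    intro f hf
    set a := f.coeff (m + 1) with ha
    have hgdeg : (f - C a * tau θ (m + 1)).natDegree ≤ m := by
      rw [natDegree_le_iff_coeff_eq_zero]
      intro N hN
      rcases eq_or_lt_of_le (Nat.succ_le_of_lt hN) with h | h
      · have h1 : (tau θ (m + 1)).coeff (m + 1) = 1 := by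
          have := (tau_monic θ (m + 1)).coeff_natDegree
          rwa [tau_natDegree] at this
        simp only [coeff_sub, coeff_C_mul, ← h, h1, mul_one, Nat.succ_eq_add_one, ha, sub_self]
      · have h2 : f.coeff N = 0 := coeff_eq_zero_of_natDegree_lt (lt_of_le_of_lt hf h)
        have h3 : (tau θ (m + 1)).coeff N = 0 := by
          apply coeff_eq_zero_of_natDegree_lt
          rw [tau_natDegree]; exact h
        simp [h2, h3]
    obtain ⟨c, hcs, hc⟩ := ih _ hgdeg
    refine ⟨fun i => if i = m + 1 then a else c i, ?_, ?_⟩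
    · intro i hi
      simp only [if_neg (by omega : ¬ i = m + 1)]
      exact hcs i (by omega)
    · rw [Finset.sum_range_succ]
      have he : ∀ i ∈ Finset.range (m + 1),
          C (if i = m + 1 then a else c i) * tau θ i = C (c i) * tau θ i := by
        intro i hi
        simp only [Finset.mem_range] at hi
        simp only [if_neg (by omega : ¬ i = m + 1)]
      rw [Finset.sum_congr rfl he, ← hc]
      simp only [↓reduceIte]
      ring

section
variable (p : TridiagonalPair K V)

theorem evA {i : ℕ} (hi : i ≤ p.d) {u : V} (hu : u ∈ p.Ev i) : p.A u = p.θ i • u := by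
  rw [p.hEv_eig i hi] at hu
  exact Module.End.mem_eigenspace_iff.mp hu

theorem evB {i : ℕ} (hi : i ≤ p.d) {u : V} (hu : u ∈ p.Ew i) : p.B u = p.θ' i • u := by
  rw [p.hEw_eig i hi] at hu
  exact Module.End.mem_eigenspace_iff.mp hu

def Vle (j : ℕ) : Submodule K V := ⨆ h ∈ Finset.Iic j, p.Ev h
def Vge (j : ℕ) : Submodule K V := ⨆ h ∈ Finset.Icc j p.d, p.Ev h
def Wle (j : ℕ) : Submodule K V := ⨆ h ∈ Finset.Iic j, p.Ew h
def Wge (j : ℕ) : Submodule K V := ⨆ h ∈ Finset.Icc j p.d, p.Ew h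

theorem Ev_le_Vle {h j : ℕ} (h2 : h ≤ j) : p.Ev h ≤ Vle p j :=
  le_iSup₂ (f := fun h _ => p.Ev h) h (Finset.mem_Iic.mpr h2)

theorem Ev_le_Vge {j h : ℕ} (h1 : j ≤ h) (h2 : h ≤ p.d) : p.Ev h ≤ Vge p j :=
  le_iSup₂ (f := fun h _ => p.Ev h) h (Finset.mem_Icc.mpr ⟨h1, h2⟩)

theorem Ew_le_Wle {h j : ℕ} (h2 : h ≤ j) : p.Ew h ≤ Wle p j :=
  le_iSup₂ (f := fun h _ => p.Ew h) h (Finset.mem_Iic.mpr h2)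

theorem Ew_le_Wge {j h : ℕ} (h1 : j ≤ h) (h2 : h ≤ p.d) : p.Ew h ≤ Wge p j :=
  le_iSup₂ (f := fun h _ => p.Ew h) h (Finset.mem_Icc.mpr ⟨h1, h2⟩)

theorem Vle_mono {j j' : ℕ} (h : j ≤ j') : Vle p j ≤ Vle p j' :=
  iSup₂_le fun i hi => Ev_le_Vle p (le_trans (Finset.mem_Iic.mp hi) h)

theorem Wle_mono {j j' : ℕ} (h : j ≤ j') : Wle p j ≤ Wle p j' :=
  iSup₂_le fun i hi => Ew_le_Wle p (le_trans (Finset.mem_Iic.mp hi) h)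

theorem Vge_anti {j j' : ℕ} (h : j ≤ j') : Vge p j' ≤ Vge p j :=
  iSup₂_le fun i hi => Ev_le_Vge p (le_trans h (Finset.mem_Icc.mp hi).1) (Finset.mem_Icc.mp hi).2

theorem Wge_anti {j j' : ℕ} (h : j ≤ j') : Wge p j' ≤ Wge p j :=
  iSup₂_le fun i hi => Ew_le_Wge p (le_trans h (Finset.mem_Icc.mp hi).1) (Finset.mem_Icc.mp hi).2

theorem range_eq_Icc (d : ℕ) : Finset.range (d + 1) = Finset.Icc 0 d := by
  rw [Finset.range_eq_Ico, Finset.Ico_add_one_right_eq_Icc]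

theorem Vge_zero : Vge p 0 = ⊤ := by
  rw [Vge, ← range_eq_Icc, p.hEv_top]

theorem Wge_zero : Wge p 0 = ⊤ := by
  rw [Wge, ← range_eq_Icc, p.hEw_top]

theorem Vge_bot {j : ℕ} (h : p.d < j) : Vge p j = ⊥ := by
  rw [Vge, Finset.Icc_eq_empty (by omega)]
  simp

theorem Wge_bot {j : ℕ} (h : p.d < j) : Wge p j = ⊥ := by
  rw [Wge, Finset.Icc_eq_empty (by omega)]
  simp

theorem Vle_zero : Vle p 0 = p.Ev 0 := by
  refine le_antisymm (iSup₂_le fun h hh => ?_) (Ev_le_Vle p le_rfl)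
  have : h = 0 := by simpa using hh
  rw [this]

theorem Wle_zero : Wle p 0 = p.Ew 0 := by
  refine le_antisymm (iSup₂_le fun h hh => ?_) (Ew_le_Wle p le_rfl)
  have : h = 0 := by simpa using hh
  rw [this]

theorem stepA_Vge (j : ℕ) : ∀ u ∈ Vge p j, p.A u - p.θ j • u ∈ Vge p (j + 1) := by
  have hle : Vge p j ≤ Submodule.comap (p.A - p.θ j • (1 : Module.End K V)) (Vge p (j + 1)) := by
    refine iSup₂_le fun h hh => ?_
    rcases Finset.mem_Icc.mp hh with ⟨h1, h2⟩
    intro u hu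
    simp only [Submodule.mem_comap, LinearMap.sub_apply, LinearMap.smul_apply,
      Module.End.one_apply]
    rw [evA p h2 hu, ← sub_smul]
    rcases eq_or_lt_of_le h1 with rfl | hlt
    · simp
    · exact Submodule.smul_mem _ _ (Ev_le_Vge p hlt h2 hu)
  intro u hu
  simpa using hle hu

theorem stepB_Wge (j : ℕ) : ∀ u ∈ Wge p j, p.B u - p.θ' j • u ∈ Wge p (j + 1) := by
  have hle : Wge p j ≤ Submodule.comap (p.B - p.θ' j • (1 : Module.End K V)) (Wge p (j + 1)) := by
    refine iSup₂_le fun h hh => ?_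
    rcases Finset.mem_Icc.mp hh with ⟨h1, h2⟩
    intro u hu
    simp only [Submodule.mem_comap, LinearMap.sub_apply, LinearMap.smul_apply,
      Module.End.one_apply]
    rw [evB p h2 hu, ← sub_smul]
    rcases eq_or_lt_of_le h1 with rfl | hlt
    · simp
    · exact Submodule.smul_mem _ _ (Ew_le_Wge p hlt h2 hu)
  intro u hu
  simpa using hle hu

theorem stepA_Vle (j : ℕ) : ∀ u ∈ Vle p (j + 1), p.A u - p.θ (j + 1) • u ∈ Vle p j := by
  have hle : Vle p (j + 1) ≤
      Submodule.comap (p.A - p.θ (j + 1) • (1 : Module.End K V)) (Vle p j) := by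
    refine iSup₂_le fun h hh => ?_
    have h1 : h ≤ j + 1 := Finset.mem_Iic.mp hh
    intro u hu
    simp only [Submodule.mem_comap, LinearMap.sub_apply, LinearMap.smul_apply,
      Module.End.one_apply]
    rcases le_or_gt h p.d with h2 | h2
    · rw [evA p h2 hu, ← sub_smul]
      rcases eq_or_lt_of_le h1 with rfl | hlt
      · simp
      · exact Submodule.smul_mem _ _ (Ev_le_Vle p (by omega) hu)
    · rw [p.hEv_bot h h2] at hu
      simp only [Submodule.mem_bot] at hu
      simp [hu]
  intro u hu
  simpa using hle hu

theorem stepB_Wle (j : ℕ) : ∀ u ∈ Wle p (j + 1), p.B u - p.θ' (j + 1) • u ∈ Wle p j := by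
  have hle : Wle p (j + 1) ≤
      Submodule.comap (p.B - p.θ' (j + 1) • (1 : Module.End K V)) (Wle p j) := by
    refine iSup₂_le fun h hh => ?_
    have h1 : h ≤ j + 1 := Finset.mem_Iic.mp hh
    intro u hu
    simp only [Submodule.mem_comap, LinearMap.sub_apply, LinearMap.smul_apply,
      Module.End.one_apply]
    rcases le_or_gt h p.d with h2 | h2
    · rw [evB p h2 hu, ← sub_smul]
      rcases eq_or_lt_of_le h1 with rfl | hlt
      · simp
      · exact Submodule.smul_mem _ _ (Ew_le_Wle p (by omega) hu)
    · rw [p.hEw_bot h h2] at hu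
      simp only [Submodule.mem_bot] at hu
      simp [hu]
  intro u hu
  simpa using hle hu

theorem triB_Vge (j : ℕ) : ∀ u ∈ Vge p (j + 1), p.B u ∈ Vge p j := by
  have hle : Vge p (j + 1) ≤ Submodule.comap p.B (Vge p j) := by
    refine iSup₂_le fun h hh => ?_
    rcases Finset.mem_Icc.mp hh with ⟨h1, h2⟩
    intro u hu
    simp only [Submodule.mem_comap]
    have htri := p.hTriB h h2 u hu
    have hsub : p.Ev (h - 1) ⊔ p.Ev h ⊔ p.Ev (h + 1) ≤ Vge p j := by
      refine sup_le (sup_le ?_ ?_) ?_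
      · exact Ev_le_Vge p (by omega) (by omega)
      · exact Ev_le_Vge p (by omega) h2
      · rcases le_or_gt (h + 1) p.d with h3 | h3
        · exact Ev_le_Vge p (by omega) h3
        · rw [p.hEv_bot _ h3]; exact bot_le
    exact hsub htri
  intro u hu
  exact hle hu

theorem triA_Wge (j : ℕ) : ∀ u ∈ Wge p (j + 1), p.A u ∈ Wge p j := by
  have hle : Wge p (j + 1) ≤ Submodule.comap p.A (Wge p j) := by
    refine iSup₂_le fun h hh => ?_
    rcases Finset.mem_Icc.mp hh with ⟨h1, h2⟩
    intro u hu
    simp only [Submodule.mem_comap]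
    have htri := p.hTriA h h2 u hu
    have hsub : p.Ew (h - 1) ⊔ p.Ew h ⊔ p.Ew (h + 1) ≤ Wge p j := by
      refine sup_le (sup_le ?_ ?_) ?_
      · exact Ew_le_Wge p (by omega) (by omega)
      · exact Ew_le_Wge p (by omega) h2
      · rcases le_or_gt (h + 1) p.d with h3 | h3
        · exact Ew_le_Wge p (by omega) h3
        · rw [p.hEw_bot _ h3]; exact bot_le
    exact hsub htri
  intro u hu
  exact hle hu

theorem triB_Vle (j : ℕ) : ∀ u ∈ Vle p j, p.B u ∈ Vle p (j + 1) := by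
  have hle : Vle p j ≤ Submodule.comap p.B (Vle p (j + 1)) := by
    refine iSup₂_le fun h hh => ?_
    have h1 : h ≤ j := Finset.mem_Iic.mp hh
    intro u hu
    simp only [Submodule.mem_comap]
    rcases le_or_gt h p.d with h2 | h2
    · have htri := p.hTriB h h2 u hu
      have hsub : p.Ev (h - 1) ⊔ p.Ev h ⊔ p.Ev (h + 1) ≤ Vle p (j + 1) := by
        refine sup_le (sup_le ?_ ?_) ?_
        · exact Ev_le_Vle p (by omega)
        · exact Ev_le_Vle p (by omega)
        · exact Ev_le_Vle p (by omega)
      exact hsub htri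
    · rw [p.hEv_bot h h2] at hu
      simp only [Submodule.mem_bot] at hu
      simp [hu]
  intro u hu
  exact hle hu

theorem triA_Wle (j : ℕ) : ∀ u ∈ Wle p j, p.A u ∈ Wle p (j + 1) := by
  have hle : Wle p j ≤ Submodule.comap p.A (Wle p (j + 1)) := by
    refine iSup₂_le fun h hh => ?_
    have h1 : h ≤ j := Finset.mem_Iic.mp hh
    intro u hu
    simp only [Submodule.mem_comap]
    rcases le_or_gt h p.d with h2 | h2
    · have htri := p.hTriA h h2 u hu
      have hsub : p.Ew (h - 1) ⊔ p.Ew h ⊔ p.Ew (h + 1) ≤ Wle p (j + 1) := by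
        refine sup_le (sup_le ?_ ?_) ?_
        · exact Ew_le_Wle p (by omega)
        · exact Ew_le_Wle p (by omega)
        · exact Ew_le_Wle p (by omega)
      exact hsub htri
    · rw [p.hEw_bot h h2] at hu
      simp only [Submodule.mem_bot] at hu
      simp [hu]
  intro u hu
  exact hle hu

end

section
variable (p : TridiagonalPair K V)

theorem corner_zero (C : ℕ → Submodule K V) (hC0 : C 0 = ⊥)
    (hA : ∀ i, ∃ a : K, ∀ u ∈ C i, p.A u - a • u ∈ C (i + 1))
    (hB : ∀ i, ∃ b : K, ∀ u ∈ C (i + 1), p.B u - b • u ∈ C i)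
    (hne : (⨆ i, C i) ≠ ⊤) : ∀ i, C i = ⊥ := by
  have hle : ∀ i, C i ≤ ⨆ i, C i := fun i => le_iSup C i
  have hAW : ∀ v ∈ (⨆ i, C i), p.A v ∈ (⨆ i, C i) := by
    intro v hv
    refine Submodule.iSup_induction (motive := fun x => p.A x ∈ ⨆ i, C i) C hv ?_ (by simp) ?_
    · intro i u hu
      obtain ⟨a, ha⟩ := hA i
      have he : p.A u = (p.A u - a • u) + a • u := by abel
      rw [he]
      exact add_mem (hle (i + 1) (ha u hu)) (Submodule.smul_mem _ _ (hle i hu))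
    · intro x y hx hy
      rw [map_add]
      exact add_mem hx hy
  have hBW : ∀ v ∈ (⨆ i, C i), p.B v ∈ (⨆ i, C i) := by
    intro v hv
    refine Submodule.iSup_induction (motive := fun x => p.B x ∈ ⨆ i, C i) C hv ?_ (by simp) ?_
    · intro i u hu
      cases i with
      | zero =>
        rw [hC0] at hu
        simp only [Submodule.mem_bot] at hu
        simp [hu]
      | succ t =>
        obtain ⟨b, hb⟩ := hB t
        have he : p.B u = (p.B u - b • u) + b • u := by abel
        rw [he]
        exact add_mem (hle t (hb u hu)) (Submodule.smul_mem _ _ (hle (t + 1) hu))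
    · intro x y hx hy
      rw [map_add]
      exact add_mem hx hy
  rcases p.hIrr _ hAW hBW with h | h
  · intro i
    exact le_bot_iff.mp (h ▸ hle i)
  · exact absurd h hne

theorem disjEv {j : ℕ} (hj : j ≤ p.d) (s : Finset ℕ) (hs : ∀ h ∈ s, h ≤ p.d ∧ h ≠ j)
    {x : V} (hx1 : x ∈ p.Ev j) (hx2 : x ∈ ⨆ h ∈ s, p.Ev h) : x = 0 := by
  have hdisj := iSupIndep_def.mp (Module.End.eigenspaces_iSupIndep p.A) (p.θ j)
  have h1 : x ∈ Module.End.eigenspace p.A (p.θ j) := by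
    rw [← p.hEv_eig j hj]; exact hx1
  have h2 : x ∈ ⨆ μ, ⨆ _ : μ ≠ p.θ j, Module.End.eigenspace p.A μ := by
    have hle : (⨆ h ∈ s, p.Ev h) ≤ ⨆ μ, ⨆ _ : μ ≠ p.θ j, Module.End.eigenspace p.A μ := by
      refine iSup₂_le fun h hh => ?_
      obtain ⟨hhd, hhj⟩ := hs h hh
      have hne : p.θ h ≠ p.θ j := fun e => hhj (p.hθ_inj h hhd j hj e)
      rw [p.hEv_eig h hhd]
      exact le_iSup₂ (f := fun μ _ => Module.End.eigenspace p.A μ) (p.θ h) hne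
    exact hle hx2
  exact Submodule.disjoint_def.mp hdisj x h1 h2

theorem disjEw {j : ℕ} (hj : j ≤ p.d) (s : Finset ℕ) (hs : ∀ h ∈ s, h ≤ p.d ∧ h ≠ j)
    {x : V} (hx1 : x ∈ p.Ew j) (hx2 : x ∈ ⨆ h ∈ s, p.Ew h) : x = 0 := by
  have hdisj := iSupIndep_def.mp (Module.End.eigenspaces_iSupIndep p.B) (p.θ' j)
  have h1 : x ∈ Module.End.eigenspace p.B (p.θ' j) := by
    rw [← p.hEw_eig j hj]; exact hx1
  have h2 : x ∈ ⨆ μ, ⨆ _ : μ ≠ p.θ' j, Module.End.eigenspace p.B μ := by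
    have hle : (⨆ h ∈ s, p.Ew h) ≤ ⨆ μ, ⨆ _ : μ ≠ p.θ' j, Module.End.eigenspace p.B μ := by
      refine iSup₂_le fun h hh => ?_
      obtain ⟨hhd, hhj⟩ := hs h hh
      have hne : p.θ' h ≠ p.θ' j := fun e => hhj (p.hθ'_inj h hhd j hj e)
      rw [p.hEw_eig h hhd]
      exact le_iSup₂ (f := fun μ _ => Module.End.eigenspace p.B μ) (p.θ' h) hne
    exact hle hx2
  exact Submodule.disjoint_def.mp hdisj x h1 h2

theorem Vge_one_ne_top : Vge p 1 ≠ ⊤ := by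
  intro htop
  obtain ⟨x, hx, hx0⟩ := Submodule.exists_mem_ne_zero_of_ne_bot (p.hEv_ne 0 (Nat.zero_le _))
  refine hx0 (disjEv p (Nat.zero_le _) (Finset.Icc 1 p.d) ?_ hx ?_)
  · intro h hh
    rcases Finset.mem_Icc.mp hh with ⟨h1, h2⟩
    exact ⟨h2, by omega⟩
  · show x ∈ Vge p 1
    rw [htop]; trivial

theorem Vle_pred_ne_top (hd : 1 ≤ p.d) : Vle p (p.d - 1) ≠ ⊤ := by
  intro htop
  obtain ⟨x, hx, hx0⟩ := Submodule.exists_mem_ne_zero_of_ne_bot (p.hEv_ne p.d le_rfl)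
  refine hx0 (disjEv p le_rfl (Finset.Iic (p.d - 1)) ?_ hx ?_)
  · intro h hh
    have := Finset.mem_Iic.mp hh
    exact ⟨by omega, by omega⟩
  · show x ∈ Vle p (p.d - 1)
    rw [htop]; trivial

theorem corner2 : ∀ t, Wle p t ⊓ Vge p (t + 1) = ⊥ := by
  intro t
  set C : ℕ → Submodule K V := fun i =>
    match i with
    | 0 => ⊥
    | t + 1 => Wle p t ⊓ Vge p (t + 1) with hC
  have hz := corner_zero p C rfl ?_ ?_ ?_
  · exact hz (t + 1)
  · intro i
    cases i with
    | zero => exact ⟨0, fun u hu => by simp only [hC, Submodule.mem_bot] at hu; simp [hu]⟩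
    | succ t =>
      refine ⟨p.θ (t + 1), fun u hu => ?_⟩
      obtain ⟨hu1, hu2⟩ := hu
      refine Submodule.mem_inf.mpr ⟨?_, ?_⟩
      · exact Submodule.sub_mem _ (triA_Wle p t u hu1)
          (Wle_mono p (Nat.le_succ t) (Submodule.smul_mem _ _ hu1))
      · exact stepA_Vge p (t + 1) u hu2
  · intro i
    cases i with
    | zero =>
      refine ⟨p.θ' 0, fun u hu => ?_⟩
      obtain ⟨hu1, hu2⟩ := hu
      rw [Wle_zero] at hu1
      have := evB p (Nat.zero_le _) hu1
      simp [hC, this]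
    | succ t =>
      refine ⟨p.θ' (t + 1), fun u hu => ?_⟩
      obtain ⟨hu1, hu2⟩ := hu
      refine Submodule.mem_inf.mpr ⟨?_, ?_⟩
      · exact stepB_Wle p t u hu1
      · exact Submodule.sub_mem _ (triB_Vge p (t + 1) u hu2)
          (Vge_anti p (Nat.le_succ (t + 1)) (Submodule.smul_mem _ _ hu2))
  · intro htop
    apply Vge_one_ne_top p
    rw [eq_top_iff, ← htop]
    refine iSup_le fun i => ?_
    cases i with
    | zero => exact bot_le
    | succ t => exact le_trans inf_le_right (Vge_anti p (by omega))

theorem corner1 (hd : 1 ≤ p.d) : ∀ x ∈ p.Ew 0, x ∈ Vle p (p.d - 1) → x = 0 := by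
  set C : ℕ → Submodule K V := fun i =>
    match i with
    | 0 => ⊥
    | t + 1 => if t + 1 ≤ p.d then Wle p t ⊓ Vle p (p.d - (t + 1)) else ⊥ with hC
  have hz := corner_zero p C rfl ?_ ?_ ?_
  · intro x hx1 hx2
    have hm : x ∈ C 1 := by
      simp only [hC, if_pos hd]
      exact Submodule.mem_inf.mpr ⟨(Wle_zero p).symm ▸ hx1, hx2⟩
    rw [hz 1] at hm
    simpa using hm
  · intro i
    cases i with
    | zero => exact ⟨0, fun u hu => by simp only [hC, Submodule.mem_bot] at hu; simp [hu]⟩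
    | succ t =>
      by_cases ht : t + 1 ≤ p.d
      · refine ⟨p.θ (p.d - (t + 1)), fun u hu => ?_⟩
        simp only [hC, if_pos ht] at hu
        obtain ⟨hu1, hu2⟩ := hu
        rcases Nat.eq_zero_or_eq_succ_pred (p.d - (t + 1)) with h0 | hs
        · have hdt : p.d = t + 1 := by omega
          rw [h0, Vle_zero] at hu2
          have := evA p (Nat.zero_le _) hu2
          rw [h0, this]
          simp
        · set s := p.d - (t + 1) - 1 with hsdef
          have hds : p.d - (t + 1) = s + 1 := by omega
          rw [hds] at hu2 ⊢
          have hstep := stepA_Vle p s u hu2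
          have hwle : p.A u - p.θ (s + 1) • u ∈ Wle p (t + 1) := by
            refine Submodule.sub_mem _ (triA_Wle p t u hu1)
              (Wle_mono p (Nat.le_succ t) (Submodule.smul_mem _ _ hu1))
          have ht2 : t + 2 ≤ p.d := by omega
          simp only [hC, if_pos ht2]
          exact Submodule.mem_inf.mpr ⟨hwle, by rw [(by omega : p.d - (t + 2) = s)]; exact hstep⟩
      · exact ⟨0, fun u hu => by simp only [hC, if_neg ht, Submodule.mem_bot] at hu; simp [hu]⟩
  · intro i
    by_cases hi : i + 1 ≤ p.d
    · refine ⟨p.θ' i, fun u hu => ?_⟩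
      simp only [hC, if_pos hi] at hu
      obtain ⟨hu1, hu2⟩ := hu
      cases i with
      | zero =>
        rw [Wle_zero] at hu1
        have := evB p (Nat.zero_le _) hu1
        simp [hC, this]
      | succ t =>
        have hwle : p.B u - p.θ' (t + 1) • u ∈ Wle p t := stepB_Wle p t u hu1
        have hvle : p.B u - p.θ' (t + 1) • u ∈ Vle p (p.d - (t + 1)) := by
          refine Submodule.sub_mem _ ?_ (Vle_mono p (by omega) (Submodule.smul_mem _ _ hu2))
          have h := triB_Vle p (p.d - (t + 2)) u hu2
          rwa [(by omega : p.d - (t + 2) + 1 = p.d - (t + 1))] at h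
        have ht1 : t + 1 ≤ p.d := by omega
        simp only [hC, if_pos ht1]
        exact Submodule.mem_inf.mpr ⟨hwle, hvle⟩
    · exact ⟨0, fun u hu => by simp only [hC, if_neg hi, Submodule.mem_bot] at hu; simp [hu]⟩
  · intro htop
    apply Vle_pred_ne_top p hd
    rw [eq_top_iff, ← htop]
    refine iSup_le fun i => ?_
    cases i with
    | zero => exact bot_le
    | succ t =>
      by_cases ht : t + 1 ≤ p.d
      · simp only [hC, if_pos ht]
        exact le_trans inf_le_right (Vle_mono p (by omega))
      · simp only [hC, if_neg ht]
        exact bot_le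

theorem corner4 : ∀ x ∈ p.Ew p.d, x ∈ Vge p 1 → x = 0 := by
  set C : ℕ → Submodule K V := fun i =>
    match i with
    | 0 => ⊥
    | t + 1 => Wge p (p.d - t) ⊓ Vge p (t + 1) with hC
  have hz := corner_zero p C rfl ?_ ?_ ?_
  · intro x hx1 hx2
    have hm : x ∈ C 1 := by
      simp only [hC, Nat.sub_zero]
      exact Submodule.mem_inf.mpr ⟨Ew_le_Wge p le_rfl le_rfl hx1, hx2⟩
    rw [hz 1] at hm
    simpa using hm
  · intro i
    cases i with
    | zero => exact ⟨0, fun u hu => by simp only [hC, Submodule.mem_bot] at hu; simp [hu]⟩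
    | succ t =>
      refine ⟨p.θ (t + 1), fun u hu => ?_⟩
      obtain ⟨hu1, hu2⟩ := hu
      refine Submodule.mem_inf.mpr ⟨?_, ?_⟩
      · rcases Nat.eq_zero_or_eq_succ_pred (p.d - t) with h0 | hs
        · have : p.d - (t + 1) = 0 := by omega
          rw [this, Wge_zero]
          trivial
        · set s := p.d - t - 1 with hsdef
          have hds : p.d - t = s + 1 := by omega
          rw [hds] at hu1
          have : p.d - (t + 1) = s := by omega
          rw [this]
          exact Submodule.sub_mem _ (triA_Wge p s u hu1)
            (Wge_anti p (Nat.le_succ s) (Submodule.smul_mem _ _ hu1))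
      · exact stepA_Vge p (t + 1) u hu2
  · intro i
    refine ⟨p.θ' (p.d - i), fun u hu => ?_⟩
    obtain ⟨hu1, hu2⟩ := hu
    rcases le_or_gt (i + 1) p.d with hi | hi
    · have hwge : p.B u - p.θ' (p.d - i) • u ∈ Wge p (p.d - i + 1) := stepB_Wge p (p.d - i) u hu1
      have hvge : p.B u - p.θ' (p.d - i) • u ∈ Vge p i := by
        refine Submodule.sub_mem _ (triB_Vge p i u hu2)
          (Vge_anti p (Nat.le_succ i) (Submodule.smul_mem _ _ hu2))
      cases i with
      | zero =>
        have : p.d - 0 + 1 = p.d + 1 := by omega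
        rw [this, Wge_bot p (by omega)] at hwge
        simp only [Submodule.mem_bot] at hwge
        rw [hwge]
        exact Submodule.zero_mem _
      | succ t =>
        have : p.d - (t + 1) + 1 = p.d - t := by omega
        rw [this] at hwge
        exact Submodule.mem_inf.mpr ⟨hwge, hvge⟩
    · have hu0 : u = 0 := by
        rw [Vge_bot p (by omega)] at hu2
        simpa using hu2
      subst hu0
      cases i with
      | zero => simp [hC]
      | succ t => simp [hC]
  · intro htop
    apply Vge_one_ne_top p
    rw [eq_top_iff, ← htop]
    refine iSup_le fun i => ?_
    cases i with
    | zero => exact bot_le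
    | succ t => exact le_trans inf_le_right (Vge_anti p (by omega))

end

theorem exists_decomp (q : ℕ → Submodule K V) (s : Finset ℕ) :
    ∀ x ∈ (⨆ i ∈ s, q i), ∃ g : ℕ → V,
      (∀ i, g i ∈ q i) ∧ (∀ i, i ∉ s → g i = 0) ∧ ∑ i ∈ s, g i = x := by
  classical
  induction s using Finset.induction_on with
  | empty =>
    intro x hx
    simp only [Finset.notMem_empty, iSup_false, iSup_bot, Submodule.mem_bot] at hx
    exact ⟨0, fun i => Submodule.zero_mem _, fun i _ => rfl, by simp [hx]⟩
  | @insert a s' ha ih =>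
    intro x hx
    rw [show (⨆ i ∈ insert a s', q i) = q a ⊔ ⨆ i ∈ s', q i by
      simp only [Finset.mem_insert, iSup_or, iSup_sup_eq, iSup_iSup_eq_left]] at hx
    obtain ⟨y, hy, z, hz, rfl⟩ := Submodule.mem_sup.mp hx
    obtain ⟨g, hg1, hg2, hg3⟩ := ih z hz
    refine ⟨Function.update g a y, ?_, ?_, ?_⟩
    · intro i
      rcases eq_or_ne i a with rfl | hia
      · simpa using hy
      · simpa [Function.update_of_ne hia] using hg1 i
    · intro i hi
      have hia : i ≠ a := fun e => hi (e ▸ Finset.mem_insert_self a s')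
      rw [Function.update_of_ne hia]
      exact hg2 i fun hin => hi (Finset.mem_insert_of_mem hin)
    · rw [Finset.sum_insert ha, Function.update_self]
      have : ∑ i ∈ s', Function.update g a y i = ∑ i ∈ s', g i :=
        Finset.sum_congr rfl fun i hi => Function.update_of_ne (fun e => ha (by rw [← e]; exact hi)) _ _
      rw [this, hg3]

section
variable (p : TridiagonalPair K V)

theorem sum_zero_Ev (g : ℕ → V) (hg : ∀ i, i ≤ p.d → g i ∈ p.Ev i) :
    ∀ t, t ≤ p.d → ∑ i ∈ Finset.range (t + 1), g i = 0 → ∀ j, j ≤ t → g j = 0 := by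
  intro t
  induction t with
  | zero =>
    intro _ hs j hj
    have : j = 0 := Nat.le_zero.mp hj
    subst this
    simpa using hs
  | succ t ih =>
    intro htd hs j hj
    rw [Finset.sum_range_succ] at hs
    have h1 : g (t + 1) = 0 := by
      have hmem : g (t + 1) ∈ p.Ev (t + 1) := hg _ htd
      have hmem2 : g (t + 1) ∈ ⨆ h ∈ Finset.range (t + 1), p.Ev h := by
        have he : g (t + 1) = -∑ i ∈ Finset.range (t + 1), g i := by
          rw [eq_neg_iff_add_eq_zero, add_comm]
          exact hs
        rw [he]
        exact Submodule.neg_mem _ (Submodule.sum_mem _ fun i hi =>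
          (le_iSup₂ (f := fun h _ => p.Ev h) i hi) (hg i (by
            simp only [Finset.mem_range] at hi; omega)))
      exact disjEv p htd (Finset.range (t + 1))
        (fun h hh => by simp only [Finset.mem_range] at hh; exact ⟨by omega, by omega⟩)
        hmem hmem2
    rcases Nat.lt_or_ge j (t + 1) with hlt | hge
    · refine ih (by omega) ?_ j (by omega)
      rw [h1, add_zero] at hs
      exact hs
    · have : j = t + 1 := by omega
      rw [this]
      exact h1

def Usub (i : ℕ) : Submodule K V := Wle p i ⊓ Vge p i

theorem sum_zero_U (g : ℕ → V) (hg : ∀ i, g i ∈ Usub p i) :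
    ∀ t, ∑ i ∈ Finset.range (t + 1), g i = 0 → ∀ j, j ≤ t → g j = 0 := by
  intro t
  induction t with
  | zero =>
    intro hs j hj
    have : j = 0 := Nat.le_zero.mp hj
    subst this
    simpa using hs
  | succ t ih =>
    intro hs j hj
    rw [Finset.sum_range_succ] at hs
    have h1 : g (t + 1) = 0 := by
      have hmem : g (t + 1) ∈ Wle p t ⊓ Vge p (t + 1) := by
        refine Submodule.mem_inf.mpr ⟨?_, (hg (t + 1)).2⟩
        have he : g (t + 1) = -∑ i ∈ Finset.range (t + 1), g i := by
          rw [eq_neg_iff_add_eq_zero, add_comm]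
          exact hs
        rw [he]
        refine Submodule.neg_mem _ (Submodule.sum_mem _ fun i hi => ?_)
        have hi' : i ≤ t := by simp only [Finset.mem_range] at hi; omega
        exact Wle_mono p hi' (hg i).1
      rw [corner2 p t] at hmem
      simpa using hmem
    rcases Nat.lt_or_ge j (t + 1) with hlt | hge
    · refine ih ?_ j (by omega)
      rw [h1, add_zero] at hs
      exact hs
    · have : j = t + 1 := by omega
      rw [this]
      exact h1

theorem pow_ev {i : ℕ} (hi : i ≤ p.d) {u : V} (hu : u ∈ p.Ev i) :
    ∀ n : ℕ, (p.A ^ n) u = (p.θ i) ^ n • u := by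
  intro n
  induction n with
  | zero => simp
  | succ n ih =>
    rw [pow_succ, Module.End.mul_apply, evA p hi hu, map_smul, ih,
      smul_smul, pow_succ, mul_comm]

theorem aeval_ev {i : ℕ} (hi : i ≤ p.d) {u : V} (hu : u ∈ p.Ev i) (f : K[X]) :
    (Polynomial.aeval p.A f) u = f.eval (p.θ i) • u := by
  induction f using Polynomial.induction_on' with
  | add f g hf hg =>
    rw [map_add, LinearMap.add_apply, hf, hg, eval_add, add_smul]
  | monomial n a =>
    rw [aeval_monomial, Module.End.mul_apply, Module.algebraMap_end_apply,
      pow_ev p hi hu n, smul_smul, eval_monomial]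

theorem aeval_tau_d1 : Polynomial.aeval p.A (tau p.θ (p.d + 1)) = 0 := by
  apply LinearMap.ext
  intro v
  simp only [LinearMap.zero_apply]
  have hv : v ∈ (⨆ i ∈ Finset.range (p.d + 1), p.Ev i) := p.hEv_top ▸ Submodule.mem_top
  obtain ⟨g, hg1, hg2, hg3⟩ := exists_decomp p.Ev (Finset.range (p.d + 1)) v hv
  rw [← hg3, map_sum]
  refine Finset.sum_eq_zero fun i hi => ?_
  have hid : i ≤ p.d := by simp only [Finset.mem_range] at hi; omega
  rw [aeval_ev p hid (hg1 i)]
  have hz : (tau p.θ (p.d + 1)).eval (p.θ i) = 0 := by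
    rw [tau_eval]
    exact Finset.prod_eq_zero hi (by simp)
  rw [hz, zero_smul]

theorem inj_tau (hd : 1 ≤ p.d) {j : ℕ} (hj : j ≤ p.d) {x : V} (hx : x ∈ p.Ew 0)
    (h0 : (Polynomial.aeval p.A (tau p.θ j)) x = 0) : x = 0 := by
  rcases Nat.eq_zero_or_eq_succ_pred j with rfl | hjs
  · simpa [tau_zero] using h0
  set t := j - 1 with ht
  have hjt : j = t + 1 := hjs
  have hv : x ∈ (⨆ i ∈ Finset.range (p.d + 1), p.Ev i) := p.hEv_top ▸ Submodule.mem_top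
  obtain ⟨g, hg1, hg2, hg3⟩ := exists_decomp p.Ev (Finset.range (p.d + 1)) x hv
  have hsum : ∑ i ∈ Finset.range (p.d + 1), (tau p.θ j).eval (p.θ i) • g i = 0 := by
    rw [← h0, ← hg3, map_sum]
    refine Finset.sum_congr rfl fun i hi => ?_
    exact (aeval_ev p (by simp only [Finset.mem_range] at hi; omega) (hg1 i) _).symm
  have hz : ∀ i, i ≤ p.d → (tau p.θ j).eval (p.θ i) • g i = 0 := by
    intro i hi
    exact sum_zero_Ev p (fun i => (tau p.θ j).eval (p.θ i) • g i)
      (fun i hi => Submodule.smul_mem _ _ (hg1 i)) p.d le_rfl hsum i hi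
  have hgz : ∀ i, j ≤ i → i ≤ p.d → g i = 0 := by
    intro i hij hid
    have hne : (tau p.θ j).eval (p.θ i) ≠ 0 := by
      rw [tau_eval]
      refine Finset.prod_ne_zero_iff.mpr fun k hk => ?_
      have hkj : k < j := Finset.mem_range.mp hk
      have : p.θ i ≠ p.θ k := fun e => by
        have := p.hθ_inj i hid k (by omega) e
        omega
      exact sub_ne_zero.mpr this
    have := hz i hid
    rcases smul_eq_zero.mp this with h | h
    · exact absurd h hne
    · exact h
  have hxmem : x ∈ Vle p (p.d - 1) := by
    rw [← hg3]
    refine Submodule.sum_mem _ fun i hi => ?_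
    have hid : i ≤ p.d := by simp only [Finset.mem_range] at hi; omega
    rcases Nat.lt_or_ge i j with hlt | hge
    · exact Ev_le_Vle p (by omega) (hg1 i)
    · rw [hgz i hge hid]
      exact Submodule.zero_mem _
  exact corner1 p hd x hx hxmem

end

theorem count_one (E : ℕ → Submodule K V) (d : ℕ)
    (hne : ∀ i ≤ d, E i ≠ ⊥)
    (hdisj : ∀ t ≤ d, ∀ x ∈ E t, x ∈ (⨆ i ∈ Finset.range t, E i) → x = 0)
    (htop : (⨆ i ∈ Finset.range (d + 1), E i) = ⊤)
    (hfin : Module.finrank K V ≤ d + 1) :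
    ∀ i ≤ d, Module.finrank K (E i) = 1 := by
  have hsum : ∀ t, t ≤ d → Module.finrank K ↥(⨆ i ∈ Finset.range (t + 1), E i)
      = ∑ i ∈ Finset.range (t + 1), Module.finrank K (E i) := by
    intro t
    induction t with
    | zero =>
      intro _
      rw [show (⨆ i ∈ Finset.range 1, E i) = E 0 by simp]
      simp
    | succ t ih =>
      intro htd
      have hins : (⨆ i ∈ Finset.range (t + 2), E i)
          = (⨆ i ∈ Finset.range (t + 1), E i) ⊔ E (t + 1) := by
        rw [Finset.range_add_one]
        rw [show (⨆ i ∈ insert (t+1) (Finset.range (t+1)), E i)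
            = E (t+1) ⊔ ⨆ i ∈ Finset.range (t+1), E i by
          simp only [Finset.mem_insert, iSup_or, iSup_sup_eq, iSup_iSup_eq_left]]
        rw [sup_comm]
      have hdd : (⨆ i ∈ Finset.range (t + 1), E i) ⊓ E (t + 1) = ⊥ := by
        rw [eq_bot_iff]
        intro x hx
        obtain ⟨hx1, hx2⟩ := Submodule.mem_inf.mp hx
        have := hdisj (t + 1) htd x hx2 hx1
        simp [this]
      have heq := Submodule.finrank_sup_add_finrank_inf_eq
        (⨆ i ∈ Finset.range (t + 1), E i) (E (t + 1))
      rw [hdd, finrank_bot] at heq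
      rw [hins, Finset.sum_range_succ, ← ih (by omega)]
      omega
  have htot : ∑ i ∈ Finset.range (d + 1), Module.finrank K (E i) = Module.finrank K V := by
    rw [← hsum d le_rfl, htop, finrank_top]
  have hpos : ∀ i, i ≤ d → 1 ≤ Module.finrank K (E i) := by
    intro i hi
    have hnt : Nontrivial ↥(E i) := Submodule.nontrivial_iff_ne_bot.mpr (hne i hi)
    exact Module.finrank_pos_iff.mpr hnt
  intro i hi
  have hmem : i ∈ Finset.range (d + 1) := Finset.mem_range.mpr (by omega)
  have hsplit : Module.finrank K (E i)
      + ∑ j ∈ (Finset.range (d + 1)).erase i, Module.finrank K (E j)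
      = ∑ j ∈ Finset.range (d + 1), Module.finrank K (E j) :=
    Finset.add_sum_erase _ (fun j => Module.finrank K (E j)) hmem
  have hcard : d ≤ ∑ j ∈ (Finset.range (d + 1)).erase i, Module.finrank K (E j) := by
    have hc : ((Finset.range (d + 1)).erase i).card = d := by
      rw [Finset.card_erase_of_mem hmem, Finset.card_range]
      omega
    have := Finset.card_nsmul_le_sum ((Finset.range (d + 1)).erase i)
      (fun j => Module.finrank K (E j)) 1
      (fun j hj => hpos j (by
        have := Finset.mem_range.mp (Finset.mem_of_mem_erase hj); omega))
    rw [hc] at this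
    simpa using this
  have := hpos i hi
  omega

end TDPaux


open TDPaux

/-- If there exists a nonzero `X ∈ D` with `X V*_0 ⊆ V*_d`, then every
eigenspace `V_i` of `A` and every eigenspace `V*_i` of `A*` has dimension `1`
over `K`; that is, `(A, A*)` is a Leonard pair. -/
theorem stmt11 {K V : Type*} [Field K] [AddCommGroup V] [Module K V]
    [FiniteDimensional K V] (hpos : 0 < Module.finrank K V)
    (p : TridiagonalPair K V)
    (X : Module.End K V) (hX : X ∈ Algebra.adjoin K {p.A}) (hX0 : X ≠ 0)
    (hXV : ∀ v ∈ p.Ew 0, X v ∈ p.Ew p.d) :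
    ∀ i ≤ p.d, Module.finrank K (p.Ev i) = 1 ∧ Module.finrank K (p.Ew i) = 1 := by
  classical
  obtain ⟨q, hq⟩ : ∃ q : Polynomial K, Polynomial.aeval p.A q = X := by
    rw [Algebra.adjoin_singleton_eq_range_aeval] at hX
    obtain ⟨q, hq⟩ := hX
    exact ⟨q, hq⟩
  have hmono : (tau p.θ (p.d + 1)).Monic := tau_monic _ _
  set f : Polynomial K := q %ₘ (tau p.θ (p.d + 1)) with hfdef
  have hfX : Polynomial.aeval p.A f = X := by
    have hdiv := Polynomial.modByMonic_add_div q (tau p.θ (p.d + 1))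
    have h2 : Polynomial.aeval p.A (f + tau p.θ (p.d + 1) * (q /ₘ tau p.θ (p.d + 1)))
        = Polynomial.aeval p.A q := by rw [hdiv]
    rw [map_add, map_mul, aeval_tau_d1 p, zero_mul, add_zero] at h2
    rw [h2, hq]
  have hf0 : f ≠ 0 := by
    intro h
    apply hX0
    rw [← hfX, h, map_zero]
  have hfdeg : f.natDegree ≤ p.d := by
    have hlt := Polynomial.degree_modByMonic_lt q hmono
    rw [Polynomial.degree_eq_natDegree hmono.ne_zero, tau_natDegree] at hlt
    have := (Polynomial.natDegree_lt_iff_degree_lt hf0).mpr (by exact_mod_cast hlt)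
    omega
  obtain ⟨c, hcsupp, hcf⟩ := tau_comb p.θ p.d f hfdeg
  obtain ⟨v₀, hv₀Ew, hv₀⟩ := Submodule.exists_mem_ne_zero_of_ne_bot (p.hEw_ne 0 (Nat.zero_le _))
  set w : ℕ → V := fun i => Polynomial.aeval p.A (tau p.θ i) v₀ with hwdef
  have hw0 : w 0 = v₀ := by simp [hwdef, tau_zero]
  have hwsucc : ∀ i, w (i + 1) = p.A (w i) - p.θ i • w i := by
    intro i
    have htau : tau p.θ (i + 1) = (Polynomial.X - Polynomial.C (p.θ i)) * tau p.θ i := by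
      rw [tau_succ, mul_comm]
    simp only [hwdef, htau, map_mul, Module.End.mul_apply, map_sub, Polynomial.aeval_X,
      Polynomial.aeval_C, LinearMap.sub_apply, Module.algebraMap_end_apply]
  have hwd1 : w (p.d + 1) = 0 := by
    simp [hwdef, aeval_tau_d1 p]
  have hwU : ∀ i, w i ∈ Usub p i := by
    intro i
    induction i with
    | zero =>
      refine Submodule.mem_inf.mpr ⟨?_, ?_⟩
      · rw [hw0]; exact Ew_le_Wle p le_rfl hv₀Ew
      · rw [Vge_zero]; trivial
    | succ i ih =>
      obtain ⟨ih1, ih2⟩ := Submodule.mem_inf.mp ih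
      refine Submodule.mem_inf.mpr ⟨?_, ?_⟩
      · rw [hwsucc]
        exact Submodule.sub_mem _ (triA_Wle p i _ ih1)
          (Wle_mono p (Nat.le_succ i) (Submodule.smul_mem _ _ ih1))
      · rw [hwsucc]
        exact stepA_Vge p i _ ih2
  have hXv : X v₀ = ∑ i ∈ Finset.range (p.d + 1), c i • w i := by
    rw [← hfX]
    conv_lhs => rw [hcf]
    rw [map_sum, LinearMap.sum_apply]
    refine Finset.sum_congr rfl fun i _ => ?_
    rw [map_mul, Polynomial.aeval_C, Module.End.mul_apply, Module.algebraMap_end_apply]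
  have hXvEw : X v₀ ∈ p.Ew p.d := hXV v₀ hv₀Ew
  have hBXv : p.B (X v₀) = p.θ' p.d • X v₀ := evB p le_rfl hXvEw
  set l : ℕ → V := fun i => p.B (w i) - p.θ' i • w i with hldef
  have hl0 : l 0 = 0 := by
    simp only [hldef]
    rw [hw0, evB p (Nat.zero_le _) hv₀Ew, sub_self]
  have hlU : ∀ t, l (t + 1) ∈ Usub p t := by
    intro t
    obtain ⟨h1, h2⟩ := Submodule.mem_inf.mp (hwU (t + 1))
    refine Submodule.mem_inf.mpr ⟨stepB_Wle p t _ h1, ?_⟩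
    exact Submodule.sub_mem _ (triB_Vge p t _ h2)
      (Vge_anti p (Nat.le_succ t) (Submodule.smul_mem _ _ h2))
  have hsum0 : ∑ j ∈ Finset.range (p.d + 1),
      ((c j * (p.θ' p.d - p.θ' j)) • w j - c (j + 1) • l (j + 1)) = 0 := by
    have h2 := Finset.sum_range_succ' (fun i => c i • l i) (p.d + 1)
    have h3 := Finset.sum_range_succ (fun i => c i • l i) (p.d + 1)
    have hz1 : c 0 • l 0 = 0 := by rw [hl0, smul_zero]
    have hz2 : c (p.d + 1) • l (p.d + 1) = 0 := by
      rw [hcsupp (p.d + 1) (by omega), zero_smul]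
    rw [h3, hz2, add_zero, hz1, add_zero] at h2
    have e1 : ∑ j ∈ Finset.range (p.d + 1), c (j + 1) • l (j + 1)
        = ∑ j ∈ Finset.range (p.d + 1), c j • l j := h2.symm
    rw [Finset.sum_sub_distrib, e1]
    have e2 : ∑ j ∈ Finset.range (p.d + 1), (c j * (p.θ' p.d - p.θ' j)) • w j
        = p.θ' p.d • X v₀ - ∑ j ∈ Finset.range (p.d + 1), c j • (p.θ' j • w j) := by
      rw [hXv, Finset.smul_sum, ← Finset.sum_sub_distrib]
      refine Finset.sum_congr rfl fun j _ => ?_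
      module
    have e3 : ∑ j ∈ Finset.range (p.d + 1), c j • l j
        = p.B (X v₀) - ∑ j ∈ Finset.range (p.d + 1), c j • (p.θ' j • w j) := by
      rw [hXv, map_sum, ← Finset.sum_sub_distrib]
      refine Finset.sum_congr rfl fun j _ => ?_
      rw [hldef, map_smul, smul_sub]
    rw [e2, e3, hBXv]
    abel
  have hstar : ∀ j, j ≤ p.d → c (j + 1) • l (j + 1) = (c j * (p.θ' p.d - p.θ' j)) • w j := by
    intro j hj
    have hg := sum_zero_U p
      (fun j => (c j * (p.θ' p.d - p.θ' j)) • w j - c (j + 1) • l (j + 1))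
      (fun i => Submodule.sub_mem _ (Submodule.smul_mem _ _ (hwU i))
        (Submodule.smul_mem _ _ (hlU i))) p.d hsum0 j hj
    exact (sub_eq_zero.mp hg).symm
  have hwinj : ∀ j, j ≤ p.d → w j ≠ 0 := by
    intro j hj h0
    rcases Nat.eq_zero_or_pos j with rfl | hjpos
    · rw [hw0] at h0; exact hv₀ h0
    · have hd1 : 1 ≤ p.d := by omega
      simp only [hwdef] at h0
      exact hv₀ (inj_tau p hd1 hj hv₀Ew h0)
  have hcd : c p.d ≠ 0 := by
    intro hcd0
    have hall : ∀ k, ∀ j, j ≤ p.d → p.d - k ≤ j → c j = 0 := by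
      intro k
      induction k with
      | zero =>
        intro j hj1 hj2
        have : j = p.d := by omega
        rw [this]; exact hcd0
      | succ k ih =>
        intro j hj1 hj2
        rcases le_or_gt (p.d - k) j with h | h
        · exact ih j hj1 h
        · have hjd : j < p.d := by omega
          have hc1 : c (j + 1) = 0 := ih (j + 1) (by omega) (by omega)
          have hs := hstar j hj1
          rw [hc1, zero_smul] at hs
          rcases smul_eq_zero.mp hs.symm with h' | h'
          · rcases mul_eq_zero.mp h' with h'' | h''
            · exact h''
            · exact absurd h'' (sub_ne_zero.mpr
                (fun e => absurd (p.hθ'_inj p.d le_rfl j (by omega) e) (by omega)))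
          · exact absurd h' (hwinj j hj1)
    have hf0' : f = 0 := by
      rw [hcf]
      refine Finset.sum_eq_zero fun i hi => ?_
      rw [hall p.d i (by simp only [Finset.mem_range] at hi; omega) (by omega), map_zero, zero_mul]
    exact hf0 hf0'
  have hc0 : c 0 ≠ 0 := by
    rcases Nat.eq_zero_or_pos p.d with hd0 | hdpos
    · rwa [hd0] at hcd
    · intro hc00
      have hXv1 : X v₀ ∈ Vge p 1 := by
        rw [hXv, Finset.sum_range_succ' (fun i => c i • w i) p.d]
        rw [hc00, zero_smul, add_zero]
        refine Submodule.sum_mem _ fun i _ => ?_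
        exact Submodule.smul_mem _ _
          ((Vge_anti p (by omega)) ((Submodule.mem_inf.mp (hwU (i + 1))).2))
      have hX0' : X v₀ = 0 := corner4 p (X v₀) hXvEw hXv1
      have hz := sum_zero_U p (fun i => c i • w i)
        (fun i => Submodule.smul_mem _ _ (hwU i)) p.d
        (by rw [← hXv]; exact hX0') p.d le_rfl
      rcases smul_eq_zero.mp hz with h | h
      · exact hcd h
      · exact hwinj p.d le_rfl h
  have hcall : ∀ j, j ≤ p.d → c j ≠ 0 := by
    intro j
    induction j with
    | zero => intro _; exact hc0
    | succ t ih =>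
      intro htd hc1
      have hs := hstar t (by omega)
      rw [hc1, zero_smul] at hs
      rcases smul_eq_zero.mp hs.symm with h' | h'
      · rcases mul_eq_zero.mp h' with h'' | h''
        · exact ih (by omega) h''
        · exact absurd h'' (sub_ne_zero.mpr
            (fun e => absurd (p.hθ'_inj p.d le_rfl t (by omega) e) (by omega)))
      · exact absurd h' (hwinj t (by omega))
  have hlval : ∀ t, t < p.d → l (t + 1)
      = ((c (t + 1))⁻¹ * (c t * (p.θ' p.d - p.θ' t))) • w t := by
    intro t ht
    have hs := hstar t (by omega)
    have hc1 : c (t + 1) ≠ 0 := hcall (t + 1) (by omega)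
    calc l (t + 1) = (c (t + 1))⁻¹ • (c (t + 1) • l (t + 1)) := by
          rw [smul_smul, inv_mul_cancel₀ hc1, one_smul]
      _ = ((c (t + 1))⁻¹ * (c t * (p.θ' p.d - p.θ' t))) • w t := by rw [hs, smul_smul]
  set gens : Finset V := (Finset.range (p.d + 1)).image w with hgens
  set W : Submodule K V := Submodule.span K (gens : Set V) with hWdef
  have hmemW : ∀ i, i ≤ p.d → w i ∈ W := by
    intro i hi
    refine Submodule.subset_span ?_
    simp only [hgens, Finset.coe_image, Set.mem_image, Finset.mem_coe, Finset.mem_range]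
    exact ⟨i, by omega, rfl⟩
  have hWA : ∀ v ∈ W, p.A v ∈ W := by
    intro v hv
    have hle : W ≤ Submodule.comap p.A W := by
      rw [hWdef, Submodule.span_le]
      intro x hx
      simp only [hgens, Finset.coe_image, Set.mem_image, Finset.mem_coe, Finset.mem_range] at hx
      obtain ⟨i, hi, rfl⟩ := hx
      show p.A (w i) ∈ W
      have he : p.A (w i) = w (i + 1) + p.θ i • w i := by rw [hwsucc i]; abel
      rw [he]
      refine Submodule.add_mem _ ?_ (Submodule.smul_mem _ _ (hmemW i (by omega)))
      rcases Nat.lt_or_ge i p.d with h | h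
      · exact hmemW (i + 1) (by omega)
      · have hid : i = p.d := by omega
        rw [hid, hwd1]
        exact Submodule.zero_mem _
    exact hle hv
  have hWB : ∀ v ∈ W, p.B v ∈ W := by
    intro v hv
    have hle : W ≤ Submodule.comap p.B W := by
      rw [hWdef, Submodule.span_le]
      intro x hx
      simp only [hgens, Finset.coe_image, Set.mem_image, Finset.mem_coe, Finset.mem_range] at hx
      obtain ⟨i, hi, rfl⟩ := hx
      show p.B (w i) ∈ W
      have he : p.B (w i) = p.θ' i • w i + l i := by simp only [hldef]; abel
      rw [he]
      refine Submodule.add_mem _ (Submodule.smul_mem _ _ (hmemW i (by omega))) ?_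
      cases i with
      | zero => rw [hl0]; exact Submodule.zero_mem _
      | succ t =>
        have ht : t < p.d := by omega
        rw [hlval t ht]
        exact Submodule.smul_mem _ _ (hmemW t (by omega))
    exact hle hv
  have hWtop : W = ⊤ := by
    rcases p.hIrr W hWA hWB with h | h
    · exfalso
      apply hv₀
      have hm : v₀ ∈ W := by rw [← hw0]; exact hmemW 0 (Nat.zero_le _)
      rw [h] at hm
      simpa using hm
    · exact h
  have hfin : Module.finrank K V ≤ p.d + 1 := by
    have h1 : Module.finrank K ↥W ≤ gens.card := by
      rw [hWdef]
      exact finrank_span_finset_le_card gens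
    have h2 : gens.card ≤ p.d + 1 := by
      refine le_trans Finset.card_image_le ?_
      simp
    have h3 : Module.finrank K ↥(⊤ : Submodule K V) = Module.finrank K V := finrank_top K V
    rw [← h3, ← hWtop]
    omega
  intro i hi
  constructor
  · refine count_one p.Ev p.d (fun i hi => p.hEv_ne i hi) ?_ p.hEv_top hfin i hi
    intro t htd x hx1 hx2
    exact disjEv p htd (Finset.range t)
      (fun h hh => by simp only [Finset.mem_range] at hh; exact ⟨by omega, by omega⟩) hx1 hx2
  · refine count_one p.Ew p.d (fun i hi => p.hEw_ne i hi) ?_ p.hEw_top hfin i hi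
    intro t htd x hx1 hx2
    exact disjEw p htd (Finset.range t)
      (fun h hh => by simp only [Finset.mem_range] at hh; exact ⟨by omega, by omega⟩) hx1 hx2
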